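/- arXiv:2002.12281 — 3 statements merged into one kernel-verified Lean document; each statement's English description precedes it below -/
import Mathlib

section
/- Let φ be a matter density and let b ≥ 0. If θ₁ and θ₂ are smooth, everywhere positive functions on ℝ³ satisfying θᵢ(x)·Δθᵢ(x) = −4πκ·φ(x) for all x ∈ ℝ³ and θᵢ(x) → b as |x| → ∞ (i = 1,2), and both θ₁ and θ₂ satisfy the decay conditions at level b, then θ₁ = θ₂. -/
open MeasureTheory Filter Metric Set

noncomputable section

abbrev E3 : Type := EuclideanSpace ℝ (Fin 3)

/-- The Euclidean Laplacian on `ℝ³`. -/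
def lap (u : E3 → ℝ) (x : E3) : ℝ :=
  ∑ i : Fin 3, fderiv ℝ (fun y => fderiv ℝ u y (EuclideanSpace.single i 1)) x
    (EuclideanSpace.single i 1)

/-- `u` satisfies the decay conditions at level `b`: for every (order of a) multi-index `k`
there is a constant `C` such that `|∂^l (u - b)| ≤ C · |x| ^ (-1 - k)` for all large `|x|`. -/
def DecayAt (b : ℝ) (u : E3 → ℝ) : Prop :=
  ∀ k : ℕ, ∃ C R : ℝ, ∀ x : E3, R ≤ ‖x‖ →
    ‖iteratedFDeriv ℝ k (fun y => u y - b) x‖ ≤ C * ‖x‖ ^ (-1 - (k : ℝ))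

/-- A matter density: smooth, compactly supported, nonnegative, not identically zero. -/
def IsMatterDensity (φ : E3 → ℝ) : Prop :=
  ContDiff ℝ (⊤ : ℕ∞) φ ∧ HasCompactSupport φ ∧ (∀ x, 0 ≤ φ x) ∧ φ ≠ 0

/-! ### Auxiliary material -/

instance : PartialOrder E3 := PartialOrder.lift (fun x => WithLp.ofLp x) (WithLp.ofLp_injective 2)

namespace RPPAux

/-- coordinates are bounded by the Euclidean norm -/
lemma abs_apply_le_norm (y : E3) (i : Fin 3) : |y i| ≤ ‖y‖ := by
  rw [EuclideanSpace.norm_eq y,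
    show |y i| = Real.sqrt (‖y i‖^2) by simp [Real.sqrt_sq_eq_abs]]
  exact Real.sqrt_le_sqrt
    (Finset.single_le_sum (f := fun j => ‖y j‖^2) (fun j _ => sq_nonneg _) (Finset.mem_univ i))

lemma norm_single (i : Fin 3) : ‖EuclideanSpace.single i (1:ℝ)‖ = 1 := by
  simp [EuclideanSpace.norm_single]

lemma fderiv_apply_le (f : E3 → ℝ) (x v : E3) :
    |fderiv ℝ f x v| ≤ ‖iteratedFDeriv ℝ 1 f x‖ * ‖v‖ := by
  have h := (iteratedFDeriv ℝ 1 f x).le_opNorm ![v]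
  simp [iteratedFDeriv_one_apply] at h ⊢
  simpa using h

lemma isCompact_Icc_E3 (a b : E3) : IsCompact (Icc a b) := by
  set eL : E3 ≃L[ℝ] (Fin 3 → ℝ) := EuclideanSpace.equiv (Fin 3) ℝ
  have h1 : IsCompact (Icc (eL a) (eL b)) := isCompact_Icc
  have h2 := h1.image eL.symm.continuous
  convert h2 using 1
  ext x
  simp only [Set.mem_image, Set.mem_Icc]
  exact ⟨fun hx => ⟨eL x, ⟨hx.1, hx.2⟩, eL.symm_apply_apply x⟩, fun ⟨y, hy, h⟩ => h ▸ hy⟩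

/-- The flux/divergence estimate: if `W` is smooth and `|W ∂ᵢW| ≤ A/‖y‖³` for `‖y‖ ≥ R₀`,
then the integral of the divergence `∑ (∂ᵢ W)² + W·ΔW` over the box `[-R,R]³` is at most
`24 A / R` for every `R ≥ R₀`. -/
lemma flux_bound (W : E3 → ℝ) (hW : ContDiff ℝ (⊤:ℕ∞) W) (A R₀ : ℝ) (hA : 0 ≤ A)
    (hR₀ : 0 < R₀)
    (hbound : ∀ y : E3, R₀ ≤ ‖y‖ → ∀ i : Fin 3,
      |W y * fderiv ℝ W y (EuclideanSpace.single i 1)| ≤ A / ‖y‖^3)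
    (R : ℝ) (hR : R₀ ≤ R) :
    ∫ x in Icc ((EuclideanSpace.equiv (Fin 3) ℝ).symm (fun _ => -R))
        ((EuclideanSpace.equiv (Fin 3) ℝ).symm (fun _ => R)),
      ((∑ i : Fin 3, (fderiv ℝ W x (EuclideanSpace.single i 1))^2) + W x * lap W x)
      ≤ 24 * A / R := by
  have hRpos : 0 < R := lt_of_lt_of_le hR₀ hR
  set eL : E3 ≃L[ℝ] (Fin 3 → ℝ) := EuclideanSpace.equiv (Fin 3) ℝ with heL
  set a : E3 := eL.symm (fun _ => -R) with ha
  set bb : E3 := eL.symm (fun _ => R) with hbb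
  have hle : a ≤ bb := fun i => show -R ≤ R by linarith
  set g : Fin 3 → E3 → ℝ := fun i x => fderiv ℝ W x (EuclideanSpace.single i 1) with hg
  have hWd : Differentiable ℝ W := hW.differentiable (by simp)
  have hgsm : ∀ i, ContDiff ℝ (⊤:ℕ∞) (g i) := fun i =>
    (hW.fderiv_right (le_refl _)).clm_apply contDiff_const
  have hgdsm : ∀ i, ContDiff ℝ (⊤:ℕ∞) (fun x => fderiv ℝ (g i) x (EuclideanSpace.single i 1)) :=
    fun i => ((hgsm i).fderiv_right (le_refl _)).clm_apply contDiff_const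
  set f : Fin 3 → E3 → ℝ := fun i x => W x * g i x with hf
  set f' : Fin 3 → E3 → E3 →L[ℝ] ℝ := fun i x => W x • fderiv ℝ (g i) x + g i x • fderiv ℝ W x
    with hf'
  have Hd : ∀ (x : E3) (i : Fin 3), HasFDerivAt (f i) (f' i x) x := fun x i =>
    (hWd x).hasFDerivAt.mul ((hgsm i).differentiable (by simp) x).hasFDerivAt
  have hDFcont : Continuous (fun x => ∑ i, f' i x (EuclideanSpace.single i 1)) := by
    apply continuous_finset_sum
    intro i _
    simp only [hf', ContinuousLinearMap.add_apply, ContinuousLinearMap.smul_apply, smul_eq_mul]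
    exact ((hW.continuous).mul ((hgdsm i).continuous)).add
      (((hgsm i).continuous).mul ((hgsm i).continuous))
  have key := integral_divergence_of_hasFDerivAt_off_countable_of_equiv eL
    (fun _ _ => Iff.rfl) (EuclideanSpace.volume_preserving_symm_measurableEquiv_toLp (Fin 3))
    f f' ∅ countable_empty a bb hle
    (fun i => ((hW.continuous).mul ((hgsm i).continuous)).continuousOn)
    (fun x _ i => Hd x i)
    (fun x => ∑ i, f' i x (EuclideanSpace.single i 1))
    (fun x => by rfl)
    (hDFcont.continuousOn.integrableOn_compact (isCompact_Icc_E3 a bb))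
  -- identify the integrand
  have hDF : ∀ x, (∑ i, f' i x (EuclideanSpace.single i 1)) =
      (∑ i : Fin 3, (fderiv ℝ W x (EuclideanSpace.single i 1))^2) + W x * lap W x := by
    intro x
    have hterm : ∀ i : Fin 3, f' i x (EuclideanSpace.single i 1) =
        (fderiv ℝ W x (EuclideanSpace.single i 1))^2 +
        W x * fderiv ℝ (g i) x (EuclideanSpace.single i 1) := by
      intro i
      simp only [hf', hg, ContinuousLinearMap.add_apply, ContinuousLinearMap.smul_apply,
        smul_eq_mul]
      ring
    rw [Finset.sum_congr rfl (fun i _ => hterm i), Finset.sum_add_distrib, lap, Finset.mul_sum]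
  rw [show (fun x => ∑ i, f' i x (EuclideanSpace.single i 1)) =
    (fun x => (∑ i : Fin 3, (fderiv ℝ W x (EuclideanSpace.single i 1))^2) + W x * lap W x)
    from funext hDF] at key
  rw [key]
  -- now bound each face integral
  have hface : ∀ (i : Fin 3) (c : ℝ), |c| = R →
      |∫ x in Icc (eL a ∘ i.succAbove) (eL bb ∘ i.succAbove),
        f i (eL.symm (i.insertNth c x))| ≤ 4 * A / R := by
    intro i c hc
    have hfin : volume (Icc (eL a ∘ i.succAbove) (eL bb ∘ i.succAbove)) < ⊤ := by
      rw [Real.volume_Icc_pi]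
      exact ENNReal.prod_lt_top (fun j _ => ENNReal.ofReal_lt_top)
    have hub : ∀ x ∈ Icc (eL a ∘ i.succAbove) (eL bb ∘ i.succAbove),
        ‖f i (eL.symm (i.insertNth c x))‖ ≤ A / R^3 := by
      intro x _
      set y : E3 := eL.symm (i.insertNth c x) with hy
      have hyi : y i = c := by
        have hj : ∀ j, y j = (i.insertNth c x : Fin 3 → ℝ) j := fun j => rfl
        rw [hj i, Fin.insertNth_apply_same]
      have hnorm : R ≤ ‖y‖ := by
        calc R = |c| := hc.symm
        _ = |y i| := by rw [hyi]
        _ ≤ ‖y‖ := abs_apply_le_norm y i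
      have h1 := hbound y (le_trans hR hnorm) i
      refine le_trans h1 ?_
      apply div_le_div_of_nonneg_left hA (by positivity)
      · gcongr
    calc |∫ x in Icc (eL a ∘ i.succAbove) (eL bb ∘ i.succAbove), f i (eL.symm (i.insertNth c x))|
        ≤ (A / R^3) * (volume (Icc (eL a ∘ i.succAbove) (eL bb ∘ i.succAbove))).toReal := by
          have := norm_setIntegral_le_of_norm_le_const hfin hub
          simpa [Real.norm_eq_abs, measureReal_def] using this
      _ ≤ 4 * A / R := by
          have hcomp : (eL a ∘ i.succAbove) = (fun _ : Fin 2 => -R) := by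
            funext j; simp [ha]
          have hcomp' : (eL bb ∘ i.succAbove) = (fun _ : Fin 2 => R) := by
            funext j; simp [hbb]
          rw [hcomp, hcomp', Real.volume_Icc_pi_toReal (fun j => by linarith)]
          have : (∏ _j : Fin 2, (R - -R)) = 4 * R^2 := by
            simp [Finset.prod_const]; ring
          rw [this]
          rw [div_mul_eq_mul_div, div_le_div_iff₀ (by positivity) hRpos]
          ring_nf
          nlinarith [sq_nonneg R, mul_nonneg hA (sq_nonneg R)]
  -- sum over the six faces
  refine le_trans (Finset.sum_le_sum (g := fun _ => 8 * A / R)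
    (fun i (_ : i ∈ Finset.univ) => ?_)) (le_of_eq ?_)
  · have h1 := hface i (eL bb i) (by simp [hbb, abs_of_pos hRpos])
    have h2 := hface i (eL a i) (by simp [ha, abs_of_pos hRpos])
    rw [abs_le] at h1 h2
    show _ ≤ 8 * A / R
    have h3 := sub_le_sub h1.2 h2.1
    refine h3.trans_eq ?_
    ring
  · simp only [Finset.sum_const, Finset.card_univ, Fintype.card_fin, nsmul_eq_mul]
    push_cast
    ring

/-- From the decay hypotheses on `θ₁, θ₂`, the product `|w ∂ᵢw|` for `w = θ₁ - θ₂`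
decays like `A/‖y‖³`. -/
lemma decay_product (θ₁ θ₂ : E3 → ℝ) (b : ℝ)
    (h₁sm : ContDiff ℝ (⊤:ℕ∞) θ₁) (h₂sm : ContDiff ℝ (⊤:ℕ∞) θ₂)
    (h₁dec : DecayAt b θ₁) (h₂dec : DecayAt b θ₂) :
    ∃ A R₀ : ℝ, 0 ≤ A ∧ 1 ≤ R₀ ∧ ∀ y : E3, R₀ ≤ ‖y‖ → ∀ i : Fin 3,
      |(θ₁ y - θ₂ y) * fderiv ℝ (fun z => θ₁ z - θ₂ z) y (EuclideanSpace.single i 1)|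
        ≤ A / ‖y‖^3 := by
  obtain ⟨C₁, R₁, h1⟩ := h₁dec 0
  obtain ⟨C₂, R₂, h2⟩ := h₂dec 0
  obtain ⟨D₁, S₁, h3⟩ := h₁dec 1
  obtain ⟨D₂, S₂, h4⟩ := h₂dec 1
  refine ⟨(|C₁| + |C₂|) * (|D₁| + |D₂|), max 1 (max (max R₁ R₂) (max S₁ S₂)), by positivity,
    le_max_left _ _, ?_⟩
  intro y hy i
  have hy1 : (1:ℝ) ≤ ‖y‖ := le_trans (le_max_left _ _) hy
  have hy0 : (0:ℝ) < ‖y‖ := lt_of_lt_of_le one_pos hy1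
  have hyR₁ : R₁ ≤ ‖y‖ := le_trans ((le_max_left _ _).trans ((le_max_left _ _).trans
    (le_max_right _ _))) hy
  have hyR₂ : R₂ ≤ ‖y‖ := le_trans ((le_max_right _ _).trans ((le_max_left _ _).trans
    (le_max_right _ _))) hy
  have hyS₁ : S₁ ≤ ‖y‖ := le_trans ((le_max_left _ _).trans ((le_max_right _ _).trans
    (le_max_right _ _))) hy
  have hyS₂ : S₂ ≤ ‖y‖ := le_trans ((le_max_right _ _).trans ((le_max_right _ _).trans
    (le_max_right _ _))) hy
  -- rpow exponents
  have e0 : ‖y‖ ^ (-1 - ((0:ℕ):ℝ)) = ‖y‖⁻¹ := by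
    norm_num
    exact Real.rpow_neg_one ‖y‖
  have e1 : ‖y‖ ^ (-1 - ((1:ℕ):ℝ)) = (‖y‖^2)⁻¹ := by
    rw [show (-1 - ((1:ℕ):ℝ)) = -(2:ℝ) by norm_num, Real.rpow_neg hy0.le]
    norm_num [Real.rpow_natCast ‖y‖ 2]
  -- zeroth order bounds
  have hb1 : |θ₁ y - b| ≤ |C₁| * ‖y‖⁻¹ := by
    have := h1 y hyR₁
    rw [norm_iteratedFDeriv_zero, e0] at this
    refine le_trans this ?_
    gcongr
    exact le_abs_self C₁
  have hb2 : |θ₂ y - b| ≤ |C₂| * ‖y‖⁻¹ := by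
    have := h2 y hyR₂
    rw [norm_iteratedFDeriv_zero, e0] at this
    refine le_trans this ?_
    gcongr
    exact le_abs_self C₂
  have hw0 : |θ₁ y - θ₂ y| ≤ (|C₁| + |C₂|) * ‖y‖⁻¹ := by
    have : θ₁ y - θ₂ y = (θ₁ y - b) - (θ₂ y - b) := by ring
    rw [this]
    calc |(θ₁ y - b) - (θ₂ y - b)| ≤ |θ₁ y - b| + |θ₂ y - b| := abs_sub _ _
      _ ≤ |C₁| * ‖y‖⁻¹ + |C₂| * ‖y‖⁻¹ := add_le_add hb1 hb2
      _ = (|C₁| + |C₂|) * ‖y‖⁻¹ := by ring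
  -- first order bounds
  have hd1 : Differentiable ℝ (fun z => θ₁ z - b) :=
    (h₁sm.differentiable (by simp)).sub_const b
  have hd2 : Differentiable ℝ (fun z => θ₂ z - b) :=
    (h₂sm.differentiable (by simp)).sub_const b
  have hfw : fderiv ℝ (fun z => θ₁ z - θ₂ z) y =
      fderiv ℝ (fun z => θ₁ z - b) y - fderiv ℝ (fun z => θ₂ z - b) y := by
    have : (fun z => θ₁ z - θ₂ z) = fun z => (θ₁ z - b) - (θ₂ z - b) := by
      funext z; ring
    rw [this]
    exact fderiv_fun_sub (hd1 y) (hd2 y)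
  have hc1 : |fderiv ℝ (fun z => θ₁ z - b) y (EuclideanSpace.single i 1)| ≤ |D₁| * (‖y‖^2)⁻¹ := by
    have h := fderiv_apply_le (fun z => θ₁ z - b) y (EuclideanSpace.single i 1)
    rw [norm_single] at h
    have h' := h3 y hyS₁
    rw [e1] at h'
    calc |fderiv ℝ (fun z => θ₁ z - b) y (EuclideanSpace.single i 1)|
        ≤ ‖iteratedFDeriv ℝ 1 (fun z => θ₁ z - b) y‖ := by simpa using h
      _ ≤ D₁ * (‖y‖^2)⁻¹ := h'
      _ ≤ |D₁| * (‖y‖^2)⁻¹ := by gcongr; exact le_abs_self D₁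
  have hc2 : |fderiv ℝ (fun z => θ₂ z - b) y (EuclideanSpace.single i 1)| ≤ |D₂| * (‖y‖^2)⁻¹ := by
    have h := fderiv_apply_le (fun z => θ₂ z - b) y (EuclideanSpace.single i 1)
    rw [norm_single] at h
    have h' := h4 y hyS₂
    rw [e1] at h'
    calc |fderiv ℝ (fun z => θ₂ z - b) y (EuclideanSpace.single i 1)|
        ≤ ‖iteratedFDeriv ℝ 1 (fun z => θ₂ z - b) y‖ := by simpa using h
      _ ≤ D₂ * (‖y‖^2)⁻¹ := h'
      _ ≤ |D₂| * (‖y‖^2)⁻¹ := by gcongr; exact le_abs_self D₂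
  have hw1 : |fderiv ℝ (fun z => θ₁ z - θ₂ z) y (EuclideanSpace.single i 1)|
      ≤ (|D₁| + |D₂|) * (‖y‖^2)⁻¹ := by
    rw [hfw, ContinuousLinearMap.sub_apply]
    calc |fderiv ℝ (fun z => θ₁ z - b) y (EuclideanSpace.single i 1) -
          fderiv ℝ (fun z => θ₂ z - b) y (EuclideanSpace.single i 1)|
        ≤ |fderiv ℝ (fun z => θ₁ z - b) y (EuclideanSpace.single i 1)| +
          |fderiv ℝ (fun z => θ₂ z - b) y (EuclideanSpace.single i 1)| := abs_sub _ _
      _ ≤ |D₁| * (‖y‖^2)⁻¹ + |D₂| * (‖y‖^2)⁻¹ := add_le_add hc1 hc2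
      _ = (|D₁| + |D₂|) * (‖y‖^2)⁻¹ := by ring
  -- combine
  rw [abs_mul]
  calc |θ₁ y - θ₂ y| * |fderiv ℝ (fun z => θ₁ z - θ₂ z) y (EuclideanSpace.single i 1)|
      ≤ ((|C₁| + |C₂|) * ‖y‖⁻¹) * ((|D₁| + |D₂|) * (‖y‖^2)⁻¹) :=
        mul_le_mul hw0 hw1 (abs_nonneg _) (by positivity)
    _ = (|C₁| + |C₂|) * (|D₁| + |D₂|) / ‖y‖^3 := by
        have hne : ‖y‖ ≠ 0 := hy0.ne'
        rw [eq_div_iff (by positivity : (‖y‖:ℝ)^3 ≠ 0)]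
        have : ‖y‖^3 = ‖y‖ * ‖y‖^2 := by ring
        rw [this]
        field_simp

end RPPAux

open RPPAux in
theorem rpp_uniqueness (κ : ℝ) (hκ : 0 < κ) (φ : E3 → ℝ) (hφ : IsMatterDensity φ)
    (b : ℝ) (hb : 0 ≤ b) (θ₁ θ₂ : E3 → ℝ)
    (h₁sm : ContDiff ℝ (⊤ : ℕ∞) θ₁) (h₁pos : ∀ x, 0 < θ₁ x)
    (h₁eq : ∀ x, θ₁ x * lap θ₁ x = -(4 * Real.pi * κ) * φ x)
    (h₁lim : Tendsto θ₁ (cocompact E3) (nhds b)) (h₁dec : DecayAt b θ₁)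
    (h₂sm : ContDiff ℝ (⊤ : ℕ∞) θ₂) (h₂pos : ∀ x, 0 < θ₂ x)
    (h₂eq : ∀ x, θ₂ x * lap θ₂ x = -(4 * Real.pi * κ) * φ x)
    (h₂lim : Tendsto θ₂ (cocompact E3) (nhds b)) (h₂dec : DecayAt b θ₂) :
    θ₁ = θ₂ := by
  obtain ⟨hφsm, hφsupp, hφpos, hφne⟩ := hφ
  have hπ := Real.pi_pos
  set w : E3 → ℝ := fun x => θ₁ x - θ₂ x with hwdef
  have hwsm : ContDiff ℝ (⊤:ℕ∞) w := h₁sm.sub h₂sm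
  have hd1 : Differentiable ℝ θ₁ := h₁sm.differentiable (by simp)
  have hd2 : Differentiable ℝ θ₂ := h₂sm.differentiable (by simp)
  have hwd : Differentiable ℝ w := hd1.sub hd2
  -- the inner derivative functions are smooth
  have hgsm₁ : ∀ i : Fin 3, ContDiff ℝ (⊤:ℕ∞)
      (fun y => fderiv ℝ θ₁ y (EuclideanSpace.single i 1)) := fun i =>
    (h₁sm.fderiv_right (le_refl _)).clm_apply contDiff_const
  have hgsm₂ : ∀ i : Fin 3, ContDiff ℝ (⊤:ℕ∞)
      (fun y => fderiv ℝ θ₂ y (EuclideanSpace.single i 1)) := fun i =>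
    (h₂sm.fderiv_right (le_refl _)).clm_apply contDiff_const
  have hgsmw : ∀ i : Fin 3, ContDiff ℝ (⊤:ℕ∞)
      (fun y => fderiv ℝ w y (EuclideanSpace.single i 1)) := fun i =>
    (hwsm.fderiv_right (le_refl _)).clm_apply contDiff_const
  -- lap is additive on the difference
  have hlap : ∀ x, lap w x = lap θ₁ x - lap θ₂ x := by
    intro x
    have hfun : ∀ i : Fin 3, (fun y => fderiv ℝ w y (EuclideanSpace.single i 1)) =
        fun y => fderiv ℝ θ₁ y (EuclideanSpace.single i 1) -
          fderiv ℝ θ₂ y (EuclideanSpace.single i 1) := by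
      intro i; funext y
      rw [hwdef, fderiv_fun_sub (hd1 y) (hd2 y), ContinuousLinearMap.sub_apply]
    rw [lap, lap, lap, ← Finset.sum_sub_distrib]
    refine Finset.sum_congr rfl fun i _ => ?_
    rw [hfun i, fderiv_fun_sub (((hgsm₁ i).differentiable (by simp)) x)
      (((hgsm₂ i).differentiable (by simp)) x), ContinuousLinearMap.sub_apply]
  -- the sign identity
  have hsign : ∀ x, 0 ≤ w x * lap w x := by
    intro x
    have e1 : lap θ₁ x = -(4 * Real.pi * κ) * φ x / θ₁ x := by
      rw [eq_div_iff (h₁pos x).ne']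
      linarith [h₁eq x]
    have e2 : lap θ₂ x = -(4 * Real.pi * κ) * φ x / θ₂ x := by
      rw [eq_div_iff (h₂pos x).ne']
      linarith [h₂eq x]
    have key : w x * lap w x = (4 * Real.pi * κ * φ x) * (w x)^2 / (θ₁ x * θ₂ x) := by
      have n1 : θ₁ x ≠ 0 := (h₁pos x).ne'
      have n2 : θ₂ x ≠ 0 := (h₂pos x).ne'
      rw [hlap x, e1, e2, hwdef]
      field_simp
      ring
    rw [key]
    apply div_nonneg
    · exact mul_nonneg (mul_nonneg (mul_nonneg (mul_nonneg
        (by norm_num : (0:ℝ) ≤ 4) hπ.le) hκ.le) (hφpos x)) (sq_nonneg _)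
    · exact (mul_pos (h₁pos x) (h₂pos x)).le
  -- decay of the product
  obtain ⟨A, R₀, hA, hR₀, hdecw⟩ := decay_product θ₁ θ₂ b h₁sm h₂sm h₁dec h₂dec
  have hR₀pos : (0:ℝ) < R₀ := lt_of_lt_of_le one_pos hR₀
  -- the nonnegative "energy density"
  set P : E3 → ℝ := fun x =>
    (∑ i : Fin 3, (fderiv ℝ w x (EuclideanSpace.single i 1))^2) + w x * lap w x with hPdef
  have hPnonneg : ∀ x, 0 ≤ P x := fun x =>
    add_nonneg (Finset.sum_nonneg fun i _ => sq_nonneg _) (hsign x)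
  have hPcont : Continuous P := by
    apply Continuous.add
    · exact continuous_finset_sum _ fun i _ => ((hgsmw i).continuous).pow 2
    · apply Continuous.mul (hwsm.continuous)
      have hsm2 : ∀ i : Fin 3, ContDiff ℝ (⊤:ℕ∞) (fun x =>
          fderiv ℝ (fun y => fderiv ℝ w y (EuclideanSpace.single i 1)) x
            (EuclideanSpace.single i 1)) := fun i =>
        ((hgsmw i).fderiv_right (le_refl _)).clm_apply contDiff_const
      exact continuous_finset_sum _ fun i _ => (hsm2 i).continuous
  -- the flux bound kills P
  have hPzero : ∀ x, P x = 0 := by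
    intro x₀
    by_contra hne
    have hpos : 0 < P x₀ := (hPnonneg x₀).lt_of_ne (Ne.symm hne)
    -- find a ball where P is at least P x₀ / 2
    obtain ⟨r, hr, hball⟩ : ∃ r > 0, ∀ y ∈ closedBall x₀ r, P x₀ / 2 ≤ P y := by
      have hc := hPcont.continuousAt (x := x₀)
      rw [Metric.continuousAt_iff] at hc
      obtain ⟨δ, hδ, hδ'⟩ := hc (P x₀ / 2) (half_pos hpos)
      refine ⟨δ/2, by linarith, fun y hy => ?_⟩
      have h5 : dist y x₀ < δ := lt_of_le_of_lt (mem_closedBall.mp hy) (by linarith)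
      have h6 := hδ' h5
      rw [Real.dist_eq, abs_lt] at h6
      linarith [h6.1]
    set ε := (P x₀ / 2) * (volume (closedBall x₀ r)).toReal with hεdef
    have hvol_pos : 0 < (volume (closedBall x₀ r)).toReal :=
      ENNReal.toReal_pos (measure_closedBall_pos volume x₀ hr).ne'
        (isCompact_closedBall x₀ r).measure_lt_top.ne
    have hε : 0 < ε := mul_pos (half_pos hpos) hvol_pos
    -- pick a large R
    set R : ℝ := max (‖x₀‖ + r) (max R₀ (24 * A / ε + 1)) with hRdef
    have hR1 : ‖x₀‖ + r ≤ R := le_max_left _ _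
    have hR2 : R₀ ≤ R := le_trans (le_max_left _ _) (le_max_right _ _)
    have hR3 : 24 * A / ε + 1 ≤ R := le_trans (le_max_right _ _) (le_max_right _ _)
    have hRpos : 0 < R := lt_of_lt_of_le hR₀pos hR2
    set eL : E3 ≃L[ℝ] (Fin 3 → ℝ) := EuclideanSpace.equiv (Fin 3) ℝ with heL
    set a : E3 := eL.symm (fun _ => -R) with ha
    set bx : E3 := eL.symm (fun _ => R) with hbx
    -- the ball is inside the box
    have hsub : closedBall x₀ r ⊆ Icc a bx := by
      intro y hy
      have hynorm : ‖y‖ ≤ ‖x₀‖ + r := by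
        have heqy : x₀ + (y - x₀) = y := by abel
        calc ‖y‖ = ‖x₀ + (y - x₀)‖ := by rw [heqy]
          _ ≤ ‖x₀‖ + ‖y - x₀‖ := norm_add_le _ _
          _ ≤ ‖x₀‖ + r := by
              rw [← dist_eq_norm]
              linarith [mem_closedBall.mp hy]
      constructor
      · intro i
        show -R ≤ y i
        have h1 := abs_apply_le_norm y i
        rw [abs_le] at h1
        linarith [h1.1]
      · intro i
        show y i ≤ R
        have h1 := abs_apply_le_norm y i
        rw [abs_le] at h1
        linarith [h1.2]
    -- lower bound for the box integral
    have hPint : IntegrableOn P (Icc a bx) :=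
      hPcont.continuousOn.integrableOn_compact (isCompact_Icc_E3 a bx)
    have hlow : ε ≤ ∫ x in Icc a bx, P x := by
      calc ε = ∫ _x in closedBall x₀ r, (P x₀ / 2) := by
            rw [setIntegral_const, smul_eq_mul, hεdef, measureReal_def]; ring
        _ ≤ ∫ x in closedBall x₀ r, P x := by
            apply setIntegral_mono_on
            · exact integrableOn_const (isCompact_closedBall x₀ r).measure_lt_top.ne
            · exact hPcont.continuousOn.integrableOn_compact (isCompact_closedBall x₀ r)
            · exact measurableSet_closedBall
            · exact hball
        _ ≤ ∫ x in Icc a bx, P x := by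
            apply setIntegral_mono_set hPint
            · exact Eventually.of_forall fun x => hPnonneg x
            · exact HasSubset.Subset.eventuallyLE hsub
    -- upper bound from the flux estimate
    have hup : (∫ x in Icc a bx, P x) ≤ 24 * A / R := by
      have := flux_bound w hwsm A R₀ hA hR₀pos
        (fun y hy i => by
          have := hdecw y hy i
          simpa [hwdef] using this) R hR2
      simpa [hPdef, ha, hbx, heL] using this
    have hcontr : 24 * A / R < ε := by
      rw [div_lt_iff₀ hRpos]
      have : ε * (24 * A / ε + 1) = 24 * A + ε := by
        field_simp
      nlinarith [mul_le_mul_of_nonneg_left hR3 hε.le]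
    linarith
  -- P ≡ 0 forces all first derivatives of w to vanish
  have hg0 : ∀ (x : E3) (i : Fin 3), fderiv ℝ w x (EuclideanSpace.single i 1) = 0 := by
    intro x i
    have hsum : (∑ i : Fin 3, (fderiv ℝ w x (EuclideanSpace.single i 1))^2) = 0 := by
      have h1 := hPzero x
      have h2 := hsign x
      have h3 : (0:ℝ) ≤ ∑ i : Fin 3, (fderiv ℝ w x (EuclideanSpace.single i 1))^2 :=
        Finset.sum_nonneg fun i _ => sq_nonneg _
      rw [hPdef] at h1
      simp only at h1
      linarith
    have := (Finset.sum_eq_zero_iff_of_nonneg (fun i _ => sq_nonneg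
      (fderiv ℝ w x (EuclideanSpace.single i 1)))).mp hsum i (Finset.mem_univ i)
    exact pow_eq_zero_iff (n := 2) (by norm_num) |>.mp this
  have hfd : ∀ x, fderiv ℝ w x = 0 := by
    intro x
    apply ContinuousLinearMap.coe_injective
    apply Module.Basis.ext (EuclideanSpace.basisFun (Fin 3) ℝ).toBasis
    intro i
    simpa [EuclideanSpace.basisFun_apply] using hg0 x i
  have hconst := is_const_of_fderiv_eq_zero hwd hfd
  have hlim : Tendsto w (cocompact E3) (nhds 0) := by
    have := h₁lim.sub h₂lim
    simpa using this
  funext x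
  have hwx : w x = 0 := by
    have heq : w = fun _ => w x := funext fun y => (hconst y x)
    rw [heq] at hlim
    exact tendsto_nhds_unique tendsto_const_nhds hlim
  have : θ₁ x - θ₂ x = 0 := hwx
  linarith
end
end

section
/- Let φ be a matter density such that κ·∫_{ℝ³} φ(ξ)/|x−ξ| dξ ≥ 1 for every x in the support of φ. Suppose θ: ℝ³ → ℝ is smooth, everywhere positive, and satisfies the Green representation identity θ(x) = 1 + κ·∫_{ℝ³} φ(ξ)·θ(ξ)⁵/|x−ξ| dξ for all x ∈ ℝ³ (equivalently, θ solves Δθ = −4πκ·φ·θ⁵ with θ → 1 at infinity and the decay conditions at level 1). Then θ(x) ≥ 2^(5^n) for every n ∈ ℕ and every x in the support of φ; consequently no such solution θ exists. -/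
open MeasureTheory Filter Metric Set

noncomputable section

theorem no_solution_for_large_density (κ : ℝ) (hκ : 0 < κ)
    (φ : E3 → ℝ) (hφ : IsMatterDensity φ)
    (hbig : ∀ x ∈ tsupport φ, 1 ≤ κ * ∫ ξ, φ ξ / ‖x - ξ‖)
    (θ : E3 → ℝ) (hsm : ContDiff ℝ (⊤ : ℕ∞) θ) (hpos : ∀ x, 0 < θ x)
    (hrep : ∀ x, θ x = 1 + κ * ∫ ξ, φ ξ * θ ξ ^ 5 / ‖x - ξ‖) :
    (∀ n : ℕ, ∀ x ∈ tsupport φ, (2 : ℝ) ^ (5 ^ n) ≤ θ x) ∧ False := by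
  obtain ⟨hφsm, hφcs, hφnn, hφne⟩ := hφ
  have hφc : Continuous φ := hφsm.continuous
  have hθc : Continuous θ := hsm.continuous
  -- θ ≥ 1 everywhere
  have h1 : ∀ y, 1 ≤ θ y := by
    intro y
    rw [hrep y]
    have hI : 0 ≤ ∫ ξ, φ ξ * θ ξ ^ 5 / ‖y - ξ‖ :=
      integral_nonneg fun ξ =>
        div_nonneg (mul_nonneg (hφnn ξ) (pow_nonneg (hpos ξ).le 5)) (norm_nonneg _)
    nlinarith [mul_nonneg hκ.le hI]
  -- tsupport is nonempty
  obtain ⟨x₀, hx₀⟩ : ∃ x, φ x ≠ 0 := Function.ne_iff.mp hφne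
  have hx₀K : x₀ ∈ tsupport φ := subset_tsupport φ hx₀
  -- max of θ on tsupport
  obtain ⟨z, hzK, hzmax⟩ :=
    (hφcs : IsCompact (tsupport φ)).exists_isMaxOn ⟨x₀, hx₀K⟩ hθc.continuousOn
  -- integrability of the kernel against φ, for x ∈ tsupport
  have hf_int : ∀ x ∈ tsupport φ, Integrable (fun ξ => φ ξ / ‖x - ξ‖) := by
    intro x hx
    by_contra h
    have := hbig x hx
    rw [integral_undef h] at this
    linarith
  -- integrability of the kernel against φ θ⁵
  have hg_int : ∀ x ∈ tsupport φ, Integrable (fun ξ => φ ξ * θ ξ ^ 5 / ‖x - ξ‖) := by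
    intro x hx
    refine Integrable.mono' (((hf_int x hx).const_mul (θ z ^ 5))) ?_ ?_
    · exact ((hφc.measurable.mul (hθc.measurable.pow_const 5)).div
        ((continuous_const.sub continuous_id).norm.measurable)).aestronglyMeasurable
    · refine Filter.Eventually.of_forall fun ξ => ?_
      have h0 : 0 ≤ φ ξ * θ ξ ^ 5 / ‖x - ξ‖ :=
        div_nonneg (mul_nonneg (hφnn ξ) (pow_nonneg (hpos ξ).le 5)) (norm_nonneg _)
      rw [Real.norm_of_nonneg h0, mul_div_assoc]
      by_cases hξ : ξ ∈ tsupport φ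
      · have : θ ξ ^ 5 ≤ θ z ^ 5 :=
          pow_le_pow_left₀ (hpos ξ).le (hzmax hξ) 5
        have hd : (0:ℝ) ≤ φ ξ / ‖x - ξ‖ := div_nonneg (hφnn ξ) (norm_nonneg _)
        calc φ ξ * (θ ξ ^ 5 / ‖x - ξ‖) = θ ξ ^ 5 * (φ ξ / ‖x - ξ‖) := by ring
          _ ≤ θ z ^ 5 * (φ ξ / ‖x - ξ‖) := by
              exact mul_le_mul_of_nonneg_right this hd
      · have : φ ξ = 0 := image_eq_zero_of_notMem_tsupport hξ
        simp [this]
  -- the iteration step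
  have step : ∀ c : ℝ, 0 ≤ c → (∀ y ∈ tsupport φ, c ≤ θ y) →
      ∀ x ∈ tsupport φ, 1 + c ^ 5 ≤ θ x := by
    intro c hc hcθ x hx
    have hmono : ∫ ξ, c ^ 5 * (φ ξ / ‖x - ξ‖) ≤ ∫ ξ, φ ξ * θ ξ ^ 5 / ‖x - ξ‖ := by
      refine integral_mono_of_nonneg (Filter.Eventually.of_forall fun ξ => ?_)
        (hg_int x hx) (Filter.Eventually.of_forall fun ξ => ?_)
      · exact mul_nonneg (pow_nonneg hc 5) (div_nonneg (hφnn ξ) (norm_nonneg _))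
      · by_cases hξ : ξ ∈ tsupport φ
        · have h5 : c ^ 5 ≤ θ ξ ^ 5 := pow_le_pow_left₀ hc (hcθ ξ hξ) 5
          have hd : (0:ℝ) ≤ φ ξ / ‖x - ξ‖ := div_nonneg (hφnn ξ) (norm_nonneg _)
          calc c ^ 5 * (φ ξ / ‖x - ξ‖) ≤ θ ξ ^ 5 * (φ ξ / ‖x - ξ‖) :=
                mul_le_mul_of_nonneg_right h5 hd
            _ = φ ξ * θ ξ ^ 5 / ‖x - ξ‖ := by ring
        · have : φ ξ = 0 := image_eq_zero_of_notMem_tsupport hξ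
          simp [this]
    rw [integral_const_mul] at hmono
    have hbx := hbig x hx
    have hrx := hrep x
    nlinarith [mul_le_mul_of_nonneg_left hmono hκ.le,
      mul_le_mul_of_nonneg_left hbx (pow_nonneg hc 5)]
  -- induction
  have main : ∀ n : ℕ, ∀ x ∈ tsupport φ, (2 : ℝ) ^ (5 ^ n) ≤ θ x := by
    intro n
    induction n with
    | zero =>
        intro x hx
        have := step 1 zero_le_one (fun y _ => h1 y) x hx
        norm_num at this ⊢
        linarith
    | succ n ih =>
        intro x hx
        have hc : (0:ℝ) ≤ 2 ^ (5 ^ n) := by positivity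
        have := step (2 ^ (5 ^ n)) hc ih x hx
        have heq : ((2:ℝ) ^ (5 ^ n)) ^ 5 = 2 ^ (5 ^ (n + 1)) := by
          rw [← pow_mul, pow_succ]
        rw [heq] at this
        linarith
  refine ⟨main, ?_⟩
  obtain ⟨n, hn⟩ := exists_nat_gt (θ x₀)
  have h2n : (n : ℝ) < 2 ^ n := by exact_mod_cast Nat.lt_two_pow_self (n := n)
  have hle : (2:ℝ) ^ n ≤ 2 ^ (5 ^ n) := by
    apply pow_le_pow_right₀ one_le_two
    calc n ≤ 2 ^ n := (Nat.lt_two_pow_self (n := n)).le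
      _ ≤ 5 ^ n := Nat.pow_le_pow_left (by norm_num) n
  have := main n x₀ hx₀K
  linarith
end
end

section
/- Let φ be a matter density and for α ∈ [0,1] let θ_α denote the unique smooth, everywhere positive solution of θ_α^α·Δθ_α = −4πκ·φ on ℝ³ with θ_α(x) → 1 as |x| → ∞ satisfying the decay conditions at level 1. Then for all 0 ≤ α ≤ β ≤ 1 and all x ∈ ℝ³ one has 1 ≤ θ_1(x) ≤ θ_β(x) ≤ θ_α(x) ≤ θ_0(x). -/
open MeasureTheory Filter Metric Set

noncomputable section

/-- `θ` solves the Generalized Poisson Problem with interactivity parameter `α` and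
asymptotic boundary value `1`. -/
def IsGPPSol (κ α : ℝ) (φ θ : E3 → ℝ) : Prop :=
  ContDiff ℝ (⊤ : ℕ∞) θ ∧ (∀ x, 0 < θ x) ∧
    (∀ x, θ x ^ α * lap θ x = -(4 * Real.pi * κ) * φ x) ∧
    Tendsto θ (cocompact E3) (nhds 1)


lemma one_le_top' : (1 : WithTop ℕ∞) ≤ ((⊤ : ℕ∞) : WithTop ℕ∞) := by
  exact_mod_cast le_top

lemma top_add_one_le : ((⊤ : ℕ∞) : WithTop ℕ∞) + 1 ≤ ((⊤ : ℕ∞) : WithTop ℕ∞) := by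
  exact_mod_cast le_top

lemma contDiff_fderiv_apply {f : E3 → ℝ} (hf : ContDiff ℝ (⊤ : ℕ∞) f) (v : E3) :
    ContDiff ℝ (⊤ : ℕ∞) (fun y => fderiv ℝ f y v) := by
  have h1 : ContDiff ℝ (⊤ : ℕ∞) (fderiv ℝ f) := hf.fderiv_right top_add_one_le
  exact h1.clm_apply contDiff_const

lemma lap_linear {f g : E3 → ℝ} (hf : ContDiff ℝ (⊤ : ℕ∞) f) (hg : ContDiff ℝ (⊤ : ℕ∞) g)
    (a b : ℝ) (x : E3) :
    lap (fun y => a * f y + b * g y) x = a * lap f x + b * lap g x := by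
  have hdf : ∀ y, DifferentiableAt ℝ f y := fun y => (hf.differentiable (lt_of_lt_of_le zero_lt_one one_le_top').ne') y
  have hdg : ∀ y, DifferentiableAt ℝ g y := fun y => (hg.differentiable (lt_of_lt_of_le zero_lt_one one_le_top').ne') y
  unfold lap
  rw [Finset.mul_sum, Finset.mul_sum, ← Finset.sum_add_distrib]
  refine Finset.sum_congr rfl fun i _ => ?_
  set e : E3 := EuclideanSpace.single i 1
  have key : (fun y => fderiv ℝ (fun z => a * f z + b * g z) y e)
      = fun y => a * fderiv ℝ f y e + b * fderiv ℝ g y e := by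
    funext y
    rw [fderiv_fun_add ((hdf y).const_mul a) ((hdg y).const_mul b),
        fderiv_const_mul (hdf y) a, fderiv_const_mul (hdg y) b]
    simp
  rw [key]
  have hF : DifferentiableAt ℝ (fun y => fderiv ℝ f y e) x :=
    ((contDiff_fderiv_apply hf e).differentiable (lt_of_lt_of_le zero_lt_one one_le_top').ne') x
  have hG : DifferentiableAt ℝ (fun y => fderiv ℝ g y e) x :=
    ((contDiff_fderiv_apply hg e).differentiable (lt_of_lt_of_le zero_lt_one one_le_top').ne') x
  rw [fderiv_fun_add (hF.const_mul a) (hG.const_mul b),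
      fderiv_const_mul hF a, fderiv_const_mul hG b]
  simp

lemma fderiv_normsq (y : E3) :
    fderiv ℝ (fun z : E3 => ‖z‖ ^ 2) y = 2 • (innerSL ℝ y) :=
  (hasStrictFDerivAt_norm_sq y).hasFDerivAt.fderiv

lemma lap_normsq (x : E3) : lap (fun y : E3 => ‖y‖ ^ 2) x = 6 := by
  unfold lap
  have key : ∀ i : Fin 3,
      fderiv ℝ (fun y => fderiv ℝ (fun z : E3 => ‖z‖ ^ 2) y (EuclideanSpace.single i 1)) x
        (EuclideanSpace.single i 1) = 2 := by
    intro i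
    set e : E3 := EuclideanSpace.single i 1 with he
    have h1 : (fun y => fderiv ℝ (fun z : E3 => ‖z‖ ^ 2) y e)
        = fun y => ((2 : ℝ) • (innerSL ℝ e)) y := by
      funext y
      rw [fderiv_normsq]
      simp
      exact Finset.sum_congr rfl fun j _ => mul_comm _ _
    rw [h1, ContinuousLinearMap.fderiv]
    have : ‖e‖ = 1 := by
      rw [he, EuclideanSpace.norm_single]; norm_num
    have h2 : ((2 : ℝ) • (innerSL ℝ e)) e = 2 * ‖e‖ ^ 2 := by
      simp [real_inner_self_eq_norm_sq]
    rw [h2, this]; norm_num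
  simp only [key]
  norm_num

lemma second_deriv_test {g : ℝ → ℝ} {d : ℝ} (hgd : Differentiable ℝ g)
    (hd : HasDerivAt (deriv g) d 0) (hmin : IsLocalMin g 0) : 0 ≤ d := by
  by_contra hneg
  push_neg at hneg
  have h0 : deriv g 0 = 0 := hmin.deriv_eq_zero
  have hslope : Tendsto (slope (deriv g) 0) (nhdsWithin (0 : ℝ) {(0:ℝ)}ᶜ) (nhds d) :=
    hasDerivAt_iff_tendsto_slope.mp hd
  have h1 : ∀ᶠ t in nhdsWithin (0 : ℝ) {(0:ℝ)}ᶜ, slope (deriv g) 0 t < 0 :=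
    hslope.eventually (gt_mem_nhds hneg)
  have hle : nhdsWithin (0 : ℝ) (Ioi 0) ≤ nhdsWithin (0 : ℝ) {(0:ℝ)}ᶜ :=
    nhdsWithin_mono 0 (fun t ht => ne_of_gt ht)
  have h2 : ∀ᶠ t in nhdsWithin (0 : ℝ) (Ioi 0), deriv g t < 0 := by
    filter_upwards [hle h1, self_mem_nhdsWithin] with t hst (ht : t ∈ Ioi (0:ℝ))
    have : slope (deriv g) 0 t = deriv g t / t := by
      simp [slope, h0]
      ring
    rw [this] at hst
    rcases div_neg_iff.mp hst with ⟨_, hb⟩ | ⟨ha, _⟩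
    · exact absurd (mem_Ioi.mp ht) (by linarith)
    · exact ha
  obtain ⟨η, hη, hsub⟩ := mem_nhdsGT_iff_exists_Ioo_subset.mp h2
  have hη0 : (0:ℝ) < η := hη
  have hanti : StrictAntiOn g (Icc 0 η) := by
    apply strictAntiOn_of_deriv_neg (convex_Icc 0 η) (hgd.continuous.continuousOn)
    intro t ht
    rw [interior_Icc] at ht
    exact hsub ht
  obtain ⟨ε, hε, hball⟩ := Metric.eventually_nhds_iff.mp hmin
  set t0 := min η ε / 2 with ht0def
  have ht0pos : 0 < t0 := by positivity
  have ht0η : t0 ≤ η / 2 := by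
    apply div_le_div_of_nonneg_right ?_ ?_ <;> first | exact min_le_left _ _ | norm_num
  have hlt : g t0 < g 0 := by
    apply hanti (by constructor <;> [rfl; exact le_of_lt hη0]) ⟨le_of_lt ht0pos, by linarith⟩ ht0pos
  have hge : g 0 ≤ g t0 := by
    apply hball
    simp only [dist_zero_right, Real.norm_eq_abs, abs_of_pos ht0pos]
    have : t0 ≤ ε / 2 := by
      apply div_le_div_of_nonneg_right (min_le_right _ _) (by norm_num)
    linarith
  linarith

lemma lap_nonneg_of_isLocalMin {f : E3 → ℝ} (hf : ContDiff ℝ (⊤ : ℕ∞) f) {x : E3}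
    (h : IsLocalMin f x) : 0 ≤ lap f x := by
  apply Finset.sum_nonneg
  intro i _
  set e : E3 := EuclideanSpace.single i 1 with he
  set L : ℝ → E3 := fun t => x + t • e with hL
  have hLd : ∀ t : ℝ, HasDerivAt L e t := by
    intro t
    have := ((hasDerivAt_id t).smul_const e).const_add x
    simpa [hL] using this
  have hL0 : L 0 = x := by simp [hL]
  set g : ℝ → ℝ := f ∘ L with hg
  have hfd : Differentiable ℝ f := hf.differentiable (lt_of_lt_of_le zero_lt_one one_le_top').ne'
  have hgder : ∀ t : ℝ, HasDerivAt g (fderiv ℝ f (L t) e) t := fun t =>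
    ((hfd (L t)).hasFDerivAt).comp_hasDerivAt t (hLd t)
  have hgd : Differentiable ℝ g := fun t => (hgder t).differentiableAt
  have hderg : deriv g = (fun y => fderiv ℝ f y e) ∘ L := by
    funext t; exact (hgder t).deriv
  have hFd : Differentiable ℝ (fun y => fderiv ℝ f y e) :=
    (contDiff_fderiv_apply hf e).differentiable (lt_of_lt_of_le zero_lt_one one_le_top').ne'
  have hd2 : HasDerivAt (deriv g) (fderiv ℝ (fun y => fderiv ℝ f y e) x e) 0 := by
    rw [hderg]
    have := ((hFd (L 0)).hasFDerivAt).comp_hasDerivAt 0 (hLd 0)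
    rwa [hL0] at this
  have hmin : IsLocalMin g 0 := by
    have : IsLocalMin f (L 0) := by rwa [hL0]
    exact this.comp_continuous ((hLd 0).continuousAt)
  exact second_deriv_test hgd hd2 hmin

lemma lap_const (c : ℝ) (x : E3) : lap (fun _ => c) x = 0 := by
  simp [lap]

lemma lap_sub {u v : E3 → ℝ} (hu : ContDiff ℝ (⊤ : ℕ∞) u) (hv : ContDiff ℝ (⊤ : ℕ∞) v)
    (x : E3) : lap (fun y => u y - v y) x = lap u x - lap v x := by
  have h := lap_linear hu hv 1 (-1) x
  have heq : (fun y => 1 * u y + (-1) * v y) = fun y => u y - v y := by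
    funext y; ring
  rw [heq] at h
  rw [h]; ring

lemma comp_principle {w : E3 → ℝ} (hw : ContDiff ℝ (⊤ : ℕ∞) w)
    (hlim : Tendsto w (cocompact E3) (nhds 0))
    (key : ∀ x, 0 < lap w x → 0 ≤ w x) : ∀ x, 0 ≤ w x := by
  intro x0
  by_contra hneg
  push_neg at hneg
  set δ : ℝ := -w x0 / 2 with hδdef
  have hδ : 0 < δ := by simp [hδdef]; linarith
  have hev : ∀ᶠ x in cocompact E3, dist (w x) 0 < δ :=
    Metric.tendsto_nhds.mp hlim δ hδ
  obtain ⟨K, hK, hsub⟩ := mem_cocompact.mp hev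
  obtain ⟨R0, hR0⟩ := hK.isBounded.subset_closedBall 0
  set R : ℝ := max R0 ‖x0‖ + 1 with hRdef
  have hR0lt : R0 < R := by simp [hRdef]; have := le_max_left R0 ‖x0‖; linarith
  have hx0R : ‖x0‖ < R := by simp [hRdef]; have := le_max_right R0 ‖x0‖; linarith
  have hRpos : 0 < R := lt_of_le_of_lt (norm_nonneg x0) hx0R
  have hbd : ∀ x : E3, ‖x‖ = R → |w x| < δ := by
    intro x hx
    have hxK : x ∉ K := by
      intro hxK
      have := hR0 hxK
      rw [mem_closedBall, dist_zero_right, hx] at this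
      linarith
    have := hsub hxK
    simpa [dist_zero_right] using this
  set ε : ℝ := δ / R ^ 2 with hεdef
  have hε : 0 < ε := by positivity
  have hεR : ε * R ^ 2 = δ := by
    rw [hεdef, div_mul_cancel₀ δ (by positivity)]
  set v : E3 → ℝ := fun y => 1 * w y + (-ε) * ‖y‖ ^ 2 with hvdef
  have hq : ContDiff ℝ (⊤ : ℕ∞) (fun y : E3 => ‖y‖ ^ 2) := contDiff_norm_sq ℝ
  have hvsmooth : ContDiff ℝ (⊤ : ℕ∞) v :=
    ((contDiff_const.mul hw)).add (contDiff_const.mul hq)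
  have hvcont : Continuous v := hvsmooth.continuous
  have hne : (closedBall (0 : E3) R).Nonempty := ⟨0, by simp [le_of_lt hRpos]⟩
  obtain ⟨xs, hxsmem, hxsmin⟩ :=
    (isCompact_closedBall (0 : E3) R).exists_isMinOn hne hvcont.continuousOn
  have hx0mem : x0 ∈ closedBall (0 : E3) R := by
    simp [mem_closedBall, dist_zero_right]; linarith
  have hvx0 : v x0 ≤ -(2 * δ) := by
    have : v x0 = w x0 - ε * ‖x0‖ ^ 2 := by simp [hvdef]; ring
    rw [this]
    have h1 : 0 ≤ ε * ‖x0‖ ^ 2 := by positivity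
    have h2 : w x0 = -(2 * δ) := by rw [hδdef]; ring
    linarith
  have hmin0 : v xs ≤ -(2 * δ) := le_trans (hxsmin hx0mem) hvx0
  have hxsR : ‖xs‖ ≤ R := by simpa [mem_closedBall, dist_zero_right] using hxsmem
  rcases lt_or_eq_of_le hxsR with hlt | heq
  · -- interior minimum
    have hnhds : closedBall (0 : E3) R ∈ nhds xs := by
      apply mem_of_superset (Metric.ball_mem_nhds xs (by linarith : (0:ℝ) < R - ‖xs‖))
      intro y hy
      rw [mem_ball] at hy
      rw [mem_closedBall, dist_zero_right]
      calc ‖y‖ ≤ ‖y - xs‖ + ‖xs‖ := by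
            simpa using norm_add_le (y - xs) xs
      _ ≤ (R - ‖xs‖) + ‖xs‖ := by
          have : ‖y - xs‖ < R - ‖xs‖ := by rwa [← dist_eq_norm]
          linarith
      _ = R := by ring
    have hlocmin : IsLocalMin v xs := hxsmin.isLocalMin hnhds
    have hlap : 0 ≤ lap v xs := lap_nonneg_of_isLocalMin hvsmooth hlocmin
    have hlapv : lap v xs = lap w xs - 6 * ε := by
      rw [hvdef]
      rw [lap_linear hw hq 1 (-ε) xs, lap_normsq xs]
      ring
    have hlapw : 0 < lap w xs := by
      rw [hlapv] at hlap
      linarith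
    have hwnn : 0 ≤ w xs := key xs hlapw
    have : v xs ≥ -δ := by
      have h1 : v xs = w xs - ε * ‖xs‖ ^ 2 := by simp [hvdef]; ring
      have h2 : ε * ‖xs‖ ^ 2 ≤ ε * R ^ 2 := by
        apply mul_le_mul_of_nonneg_left _ (le_of_lt hε)
        apply pow_le_pow_left₀ (norm_nonneg _) (le_of_lt hlt)
      rw [h1]
      rw [hεR] at h2
      linarith
    linarith
  · -- boundary minimum
    have hwb : |w xs| < δ := hbd xs heq
    have : v xs = w xs - δ := by
      simp only [hvdef, one_mul, neg_mul]
      rw [heq, hεR]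
      ring
    have habs := abs_lt.mp hwb
    rw [this] at hmin0
    linarith


lemma gpp_lap_eq {κ α : ℝ} {φ u : E3 → ℝ} (hu : IsGPPSol κ α φ u) (x : E3) :
    lap u x = -(4 * Real.pi * κ) * φ x / u x ^ α := by
  have hpos : (0 : ℝ) < u x ^ α := Real.rpow_pos_of_pos (hu.2.1 x) α
  field_simp
  have := hu.2.2.1 x
  linarith [this]

lemma gpp_ge_one {κ α : ℝ} (hκ : 0 < κ) {φ u : E3 → ℝ} (hφ : ∀ x, 0 ≤ φ x)
    (hu : IsGPPSol κ α φ u) : ∀ x, 1 ≤ u x := by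
  have h := comp_principle (w := fun y => u y - 1)
    (hu.1.sub contDiff_const)
    (by
      have := hu.2.2.2.sub (tendsto_const_nhds (x := (1:ℝ)) (f := cocompact E3))
      simpa using this)
    (by
      intro x hx
      exfalso
      rw [lap_sub hu.1 contDiff_const x, lap_const] at hx
      have hlap : lap u x ≤ 0 := by
        rw [gpp_lap_eq hu x]
        have h1 : (0:ℝ) < 4 * Real.pi * κ := by positivity
        have h2 : (0:ℝ) < u x ^ α := Real.rpow_pos_of_pos (hu.2.1 x) α
        have h3 : 0 ≤ φ x := hφ x
        apply div_nonpos_of_nonpos_of_nonneg _ (le_of_lt h2)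
        nlinarith
      linarith)
  intro x
  have hx : 0 ≤ u x - 1 := h x
  linarith

lemma gpp_le {κ α β : ℝ} (hκ : 0 < κ) {φ u v : E3 → ℝ} (hφ : ∀ x, 0 ≤ φ x)
    (hα : 0 ≤ α) (hαβ : α ≤ β)
    (hu : IsGPPSol κ α φ u) (hv : IsGPPSol κ β φ v)
    (hv1 : ∀ x, 1 ≤ v x) : ∀ x, v x ≤ u x := by
  have h := comp_principle (w := fun y => u y - v y)
    (hu.1.sub hv.1)
    (by
      have := hu.2.2.2.sub hv.2.2.2
      simpa using this)
    (by
      intro x hx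
      rw [lap_sub hu.1 hv.1 x, gpp_lap_eq hu x, gpp_lap_eq hv x] at hx
      set c : ℝ := 4 * Real.pi * κ with hc
      have hcpos : 0 < c := by rw [hc]; positivity
      have hA : (0:ℝ) < u x ^ α := Real.rpow_pos_of_pos (hu.2.1 x) α
      have hB : (0:ℝ) < v x ^ β := Real.rpow_pos_of_pos (hv.2.1 x) β
      -- from hx : -c φ/A - (-c φ/B) > 0 infer  v x ^ β < u x ^ α
      have hφpos : 0 < φ x := by
        rcases lt_or_eq_of_le (hφ x) with h' | h'
        · exact h'
        · exfalso
          rw [← h'] at hx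
          simp at hx
      have hBA : v x ^ β < u x ^ α := by
        by_contra hcon
        push_neg at hcon
        have h1 : c * φ x / v x ^ β ≤ c * φ x / u x ^ α :=
          div_le_div_of_nonneg_left (by positivity) hA hcon
        have e1 : -c * φ x / u x ^ α = -(c * φ x / u x ^ α) := by ring
        have e2 : -c * φ x / v x ^ β = -(c * φ x / v x ^ β) := by ring
        rw [e1, e2] at hx
        linarith
      have hvαβ : v x ^ α ≤ v x ^ β :=
        Real.rpow_le_rpow_of_exponent_le (hv1 x) hαβ
      by_contra hcon
      push_neg at hcon
      have : u x ^ α ≤ v x ^ α :=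
        Real.rpow_le_rpow (le_of_lt (hu.2.1 x)) (by linarith) hα
      linarith)
  intro x
  have hx : 0 ≤ u x - v x := h x
  linarith


theorem gpp_monotonicity_in_alpha (κ : ℝ) (hκ : 0 < κ)
    (φ : E3 → ℝ) (hφ : IsMatterDensity φ) (θ : ℝ → E3 → ℝ)
    (hθ : ∀ α ∈ Icc (0 : ℝ) 1, IsGPPSol κ α φ (θ α) ∧ DecayAt 1 (θ α)) :
    ∀ α β : ℝ, 0 ≤ α → α ≤ β → β ≤ 1 → ∀ x : E3,
      1 ≤ θ 1 x ∧ θ 1 x ≤ θ β x ∧ θ β x ≤ θ α x ∧ θ α x ≤ θ 0 x := by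
  intro α β h0α hαβ hβ1 x
  have hφ0 : ∀ y, 0 ≤ φ y := hφ.2.2.1
  obtain ⟨sα, -⟩ := hθ α ⟨h0α, hαβ.trans hβ1⟩
  obtain ⟨sβ, -⟩ := hθ β ⟨h0α.trans hαβ, hβ1⟩
  obtain ⟨s1, -⟩ := hθ 1 ⟨zero_le_one, le_refl 1⟩
  obtain ⟨s0, -⟩ := hθ 0 ⟨le_refl 0, zero_le_one⟩
  have g1 := gpp_ge_one hκ hφ0 s1
  have gβ := gpp_ge_one hκ hφ0 sβ
  have gα := gpp_ge_one hκ hφ0 sα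
  refine ⟨g1 x, ?_, ?_, ?_⟩
  · exact gpp_le hκ hφ0 (h0α.trans hαβ) hβ1 sβ s1 g1 x
  · exact gpp_le hκ hφ0 h0α hαβ sα sβ gβ x
  · exact gpp_le hκ hφ0 le_rfl h0α s0 sα gα x
end
end
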